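/- If G = G₁ *_H {t} is an injective HNN extension with stable letter t, then inside G one has G₁ ∩ t G₁ t⁻¹ = i₁(H) = t i₂(H) t⁻¹, where G₁ is identified with its image under the injective map j₁. -/
import Mathlib

open HNNExtension HNNExtension.NormalWord in
/-- Britton's lemma consequence: if `t * of g * t⁻¹` lies in the image of `G`,
then `g ∈ A`. -/
lemma hnn_conj_mem_of_range_imp_mem
    {G : Type*} [Group G] {A B : Subgroup G} {φ : A ≃* B} (g : G)
    (hg : t * (of g : HNNExtension G A B φ) * t⁻¹ ∈ (of (φ := φ)).range) :
    g ∈ A := by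
  by_contra hgA
  have chain : (([((1 : ℤˣ), g), ((-1 : ℤˣ), (1 : G))]).Chain'
      (fun a b => a.2 ∈ toSubgroup A B a.1 → a.1 = b.1)) := by
    refine List.isChain_cons_cons.2 ⟨?_, List.isChain_singleton _⟩
    intro hmem
    rw [toSubgroup_one] at hmem
    exact absurd hmem hgA
  let w : ReducedWord G A B := ⟨1, [((1 : ℤˣ), g), ((-1 : ℤˣ), (1 : G))], chain⟩
  have hprod : w.prod φ = t * (of g : HNNExtension G A B φ) * t⁻¹ := by
    simp [w, ReducedWord.prod, mul_assoc]
  have := ReducedWord.toList_eq_nil_of_mem_of_range φ w (hprod ▸ hg)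
  simp [w] at this

theorem hnn_extension_intersection
    {H G₁ : Type*} [Group H] [Group G₁] (i₁ i₂ : H →* G₁)
    (h1 : Function.Injective i₁) (h2 : Function.Injective i₂) :
    (HNNExtension.of (G := G₁) (A := i₂.range) (B := i₁.range)
          (φ := (MonoidHom.ofInjective h2).symm.trans (MonoidHom.ofInjective h1))).range ⊓
        Subgroup.map (MulAut.conj (HNNExtension.t)).toMonoidHom (HNNExtension.of).range
      = ((HNNExtension.of).comp i₁).range ∧
    ((HNNExtension.of (G := G₁) (A := i₂.range) (B := i₁.range)
          (φ := (MonoidHom.ofInjective h2).symm.trans (MonoidHom.ofInjective h1))).comp i₁).range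
      = Subgroup.map (MulAut.conj (HNNExtension.t)).toMonoidHom
          ((HNNExtension.of).comp i₂).range := by
  set φ := (MonoidHom.ofInjective h2).symm.trans (MonoidHom.ofInjective h1) with hφ
  -- the key conjugation identity: of (i₁ h) = t * of (i₂ h) * t⁻¹
  have key : ∀ h : H,
      (HNNExtension.of (i₁ h) : HNNExtension G₁ i₂.range i₁.range φ)
        = HNNExtension.t * HNNExtension.of (i₂ h) * HNNExtension.t⁻¹ := by
    intro h
    have hmem : i₂ h ∈ i₂.range := ⟨h, rfl⟩
    have hphi : (φ ⟨i₂ h, hmem⟩ : G₁) = i₁ h := by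
      have h1' : (⟨i₂ h, hmem⟩ : i₂.range) = MonoidHom.ofInjective h2 h := by
        ext; rfl
      rw [hφ]
      simp only [MulEquiv.trans_apply, h1', MulEquiv.symm_apply_apply]
      rfl
    have := HNNExtension.equiv_eq_conj (φ := φ) ⟨i₂ h, hmem⟩
    rw [hphi] at this
    exact this
  constructor
  · ext x
    simp only [Subgroup.mem_inf, Subgroup.mem_map, MonoidHom.mem_range,
      MonoidHom.comp_apply, MulEquiv.coe_toMonoidHom, MulAut.conj_apply]
    constructor
    · rintro ⟨⟨g, rfl⟩, y, ⟨g', rfl⟩, hy⟩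
      have hmem : g' ∈ i₂.range := by
        apply hnn_conj_mem_of_range_imp_mem (φ := φ) g'
        rw [hy]
        exact ⟨g, rfl⟩
      obtain ⟨h, hh⟩ := hmem
      refine ⟨h, ?_⟩
      rw [← hy, ← hh, ← key h]
    · rintro ⟨h, rfl⟩
      exact ⟨⟨i₁ h, rfl⟩, HNNExtension.of (i₂ h), ⟨i₂ h, rfl⟩, (key h).symm⟩
  · ext x
    simp only [Subgroup.mem_map, MonoidHom.mem_range, MonoidHom.comp_apply,
      MulEquiv.coe_toMonoidHom, MulAut.conj_apply]
    constructor
    · rintro ⟨h, rfl⟩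
      exact ⟨HNNExtension.of (i₂ h), ⟨h, rfl⟩, (key h).symm⟩
    · rintro ⟨y, ⟨h, rfl⟩, rfl⟩
      exact ⟨h, key h⟩
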